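/- Let n ≥ m ≥ 1. The image S_P of the embedding Δ(m-1,n-1) → Λ(m,n) given by σ ↦ (the equivariant extension of) [0]*σ, restricted to strictly monotone simplices, is a slice: S_P = { τ ∈ Λ(m,n)^♯ : τ(0) = 0 } ∩ { τ : τ(m) ≤ n }, it is convex in Λ(m,n)^♯, and it contains exactly one element of each Φ-orbit of Λ(m,n)^♯. -/

import Mathlib

/-- The set `Λ(m,n)` of paracyclic `m`-simplices: monotone maps `f : ℤ → ℤ`
satisfying `f(i+m+1) = f(i)+n+1`, partially ordered pointwise. -/
def Para (m n : ℕ) : Type :=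
  {f : ℤ → ℤ // Monotone f ∧ ∀ i : ℤ, f (i + (m + 1)) = f i + (n + 1)}

noncomputable instance (m n : ℕ) : PartialOrder (Para m n) :=
  Subtype.partialOrder _

/-- The Heller automorphism `Σ(σ)(i) = σ(i+1)`. -/
def heller (m n : ℕ) (σ : Para m n) : Para m n :=
  ⟨fun i => σ.1 (i + 1),
    fun _ _ h => σ.2.1 (by omega),
    fun i => by
      have h := σ.2.2 (i + 1)
      calc σ.1 (i + (m + 1) + 1) = σ.1 (i + 1 + (m + 1)) := by ring_nf
        _ = σ.1 (i + 1) + (n + 1) := h⟩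

/-- The Coxeter automorphism `Φ(σ)(i) = σ(i) - 1`. -/
def coxeter (m n : ℕ) (σ : Para m n) : Para m n :=
  ⟨fun i => σ.1 i - 1,
    fun a b h => by show σ.1 a - 1 ≤ σ.1 b - 1; have := σ.2.1 h; omega,
    fun i => by show σ.1 (i + (m + 1)) - 1 = σ.1 i - 1 + (n + 1); have := σ.2.2 i; omega⟩
/-- The inverse Coxeter automorphism `Φ⁻¹(σ)(i) = σ(i) + 1`. -/
def coxeterInv (m n : ℕ) (σ : Para m n) : Para m n :=
  ⟨fun i => σ.1 i + 1,
    fun a b h => by show σ.1 a + 1 ≤ σ.1 b + 1; have := σ.2.1 h; omega,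
    fun i => by show σ.1 (i + (m + 1)) + 1 = σ.1 i + 1 + (n + 1); have := σ.2.2 i; omega⟩

/-- `σ` and `τ` lie in the same `Φ`-orbit. -/
def sameOrbit (m n : ℕ) (σ τ : Para m n) : Prop :=
  ∃ k : ℤ, ∀ i : ℤ, τ.1 i = σ.1 i - k

/-- A slice in `Λ(m,n)^♯`: a finite set of strictly monotone (non-degenerate)
paracyclic simplices containing exactly one representative of each `Φ`-orbit and
convex in `Λ(m,n)^♯`. -/
def IsSlice (m n : ℕ) (S : Set (Para m n)) : Prop :=
  S.Finite ∧
  (∀ σ ∈ S, StrictMono σ.1) ∧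
  (∀ τ : Para m n, StrictMono τ.1 → ∃! ρ : Para m n, ρ ∈ S ∧ sameOrbit m n τ ρ) ∧
  (∀ σ ∈ S, ∀ τ ∈ S, ∀ ρ : Para m n, StrictMono ρ.1 → σ ≤ ρ → ρ ≤ τ → ρ ∈ S)

lemma para_shift {m n : ℕ} (τ : Para m n) (k i : ℤ) :
    τ.1 (i + k * ((m : ℤ) + 1)) = τ.1 i + k * ((n : ℤ) + 1) := by
  induction k using Int.induction_on with
  | zero => simp
  | succ k ih =>
      have h := τ.2.2 (i + (k : ℤ) * ((m : ℤ) + 1))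
      have harg : i + ((k : ℤ) + 1) * ((m : ℤ) + 1)
          = i + (k : ℤ) * ((m : ℤ) + 1) + ((m : ℤ) + 1) := by ring
      rw [harg, h, ih]; ring
  | pred k ih =>
      have h := τ.2.2 (i + (-(k : ℤ) - 1) * ((m : ℤ) + 1))
      have harg : i + (-(k : ℤ) - 1) * ((m : ℤ) + 1) + ((m : ℤ) + 1)
          = i + (-(k : ℤ)) * ((m : ℤ) + 1) := by ring
      rw [harg, ih] at h
      linarith [h]

lemma para_agree {m n : ℕ} (τ τ' : Para m n)
    (h : ∀ r : ℤ, 0 ≤ r → r ≤ m → τ.1 r = τ'.1 r) : τ = τ' := by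
  apply Subtype.ext; funext i
  have hm1 : (0:ℤ) < (m:ℤ) + 1 := by positivity
  have hdec : i = i % ((m:ℤ)+1) + (i / ((m:ℤ)+1)) * ((m:ℤ)+1) := by
    have := Int.emod_add_mul_ediv i ((m:ℤ)+1)
    linarith [this, mul_comm ((m:ℤ)+1) (i / ((m:ℤ)+1))]
  have h0 : 0 ≤ i % ((m:ℤ)+1) := Int.emod_nonneg i (by omega)
  have h1 : i % ((m:ℤ)+1) < (m:ℤ)+1 := Int.emod_lt_of_pos i hm1
  calc τ.1 i = τ.1 (i % ((m:ℤ)+1) + (i / ((m:ℤ)+1)) * ((m:ℤ)+1)) := by rw [← hdec]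
    _ = τ.1 (i % ((m:ℤ)+1)) + (i / ((m:ℤ)+1)) * ((n:ℤ)+1) := para_shift τ _ _
    _ = τ'.1 (i % ((m:ℤ)+1)) + (i / ((m:ℤ)+1)) * ((n:ℤ)+1) := by rw [h _ h0 (by omega)]
    _ = τ'.1 (i % ((m:ℤ)+1) + (i / ((m:ℤ)+1)) * ((m:ℤ)+1)) := (para_shift τ' _ _).symm
    _ = τ'.1 i := by rw [← hdec]

lemma para_strictMono {m n : ℕ} (τ : Para m n)
    (h : ∀ r : ℤ, 0 ≤ r → r ≤ m → τ.1 r < τ.1 (r + 1)) : StrictMono τ.1 := by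
  apply strictMono_int_of_lt_succ
  intro i
  have hm1 : (0:ℤ) < (m:ℤ) + 1 := by positivity
  set q := i / ((m:ℤ)+1) with hq
  set r := i % ((m:ℤ)+1) with hr
  have hdec : i = r + q * ((m:ℤ)+1) := by
    have := Int.emod_add_mul_ediv i ((m:ℤ)+1); rw [hq, hr]
    linarith [this, mul_comm ((m:ℤ)+1) (i / ((m:ℤ)+1))]
  have h0 : 0 ≤ r := Int.emod_nonneg i (by omega)
  have h1 : r < (m:ℤ)+1 := Int.emod_lt_of_pos i hm1
  have e1 : τ.1 i = τ.1 r + q * ((n:ℤ)+1) := by rw [hdec]; exact para_shift τ _ _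
  have e2 : τ.1 (i+1) = τ.1 (r+1) + q * ((n:ℤ)+1) := by
    rw [show i + 1 = r + 1 + q * ((m:ℤ)+1) by omega]; exact para_shift τ _ _
  have := h r h0 (by omega)
  omega

/-- The projective slice `S_P ⊂ Λ(m,n)^♯`, the image of the embedding
`Δ(m-1,n-1)^♯ → Λ(m,n)^♯`, `σ ↦ [0]*σ`, equals
`{τ ∈ Λ(m,n)^♯ : τ(0) = 0 and τ(m) ≤ n}` and is a slice. -/
theorem stmt_13 (m n : ℕ) (hm : 1 ≤ m) (hmn : m ≤ n) :
    (∀ τ : Para m n,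
      (StrictMono τ.1 ∧ τ.1 0 = 0 ∧ τ.1 (m : ℕ) ≤ n) ↔
      (∃ σ : Fin m → Fin n, StrictMono σ ∧ τ.1 0 = 0 ∧
        ∀ i : Fin m, τ.1 ((i : ℕ) + 1) = ((σ i : ℕ) : ℤ) + 1)) ∧
    IsSlice m n {τ : Para m n | StrictMono τ.1 ∧ τ.1 0 = 0 ∧ τ.1 (m : ℕ) ≤ n} := by
  have main : ∀ τ : Para m n,
      (StrictMono τ.1 ∧ τ.1 0 = 0 ∧ τ.1 (m : ℕ) ≤ n) ↔
      (∃ σ : Fin m → Fin n, StrictMono σ ∧ τ.1 0 = 0 ∧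
        ∀ i : Fin m, τ.1 ((i : ℕ) + 1) = ((σ i : ℕ) : ℤ) + 1) := by
    intro τ
    constructor
    · rintro ⟨hsm, h0, hmn'⟩
      have hpos : ∀ i : Fin m, 1 ≤ τ.1 ((i:ℕ)+1) := by
        intro i
        have : τ.1 0 < τ.1 ((i:ℕ)+1) := hsm (by omega)
        omega
      have hub : ∀ i : Fin m, τ.1 ((i:ℕ)+1) ≤ n := by
        intro i
        have hle : ((i:ℕ):ℤ)+1 ≤ (m:ℤ) := by have := i.2; omega
        have := τ.2.1 hle
        omega
      refine ⟨fun i => ⟨(τ.1 ((i:ℕ)+1) - 1).toNat, by have := hpos i; have := hub i; omega⟩,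
        ?_, h0, ?_⟩
      · intro a b hab
        have hab' : ((a:ℕ):ℤ)+1 < ((b:ℕ):ℤ)+1 := by
          have := Fin.lt_def.mp hab; omega
        have := hsm hab'
        simp only [Fin.mk_lt_mk]
        have := hpos a; omega
      · intro i
        have := hpos i
        simp only [Fin.val_mk]
        omega
    · rintro ⟨σ, hσ, h0, hτσ⟩
      have hval : ∀ r : ℤ, 1 ≤ r → r ≤ m →
          ∃ j : Fin m, ((j:ℕ):ℤ) + 1 = r ∧ τ.1 r = ((σ j : ℕ):ℤ) + 1 := by
        intro r h1 h2
        refine ⟨⟨(r-1).toNat, by omega⟩, ?_, ?_⟩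
        · simp only [Fin.val_mk]; omega
        · have h := hτσ ⟨(r-1).toNat, by omega⟩
          simp only [Fin.val_mk] at h
          rw [show ((r-1).toNat : ℤ) + 1 = r by omega] at h
          exact h
      have key : ∀ r : ℤ, 0 ≤ r → r ≤ m → τ.1 r < τ.1 (r+1) := by
        intro r h0r h2r
        rcases eq_or_lt_of_le h0r with h|h
        · obtain ⟨j, hj, hv⟩ := hval 1 le_rfl (by exact_mod_cast hm)
          rw [← h, h0, show (0:ℤ)+1 = 1 from rfl, hv]
          positivity
        · by_cases hr : r + 1 ≤ (m:ℤ)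
          · obtain ⟨j, hj, hv⟩ := hval r h h2r
            obtain ⟨j', hj', hv'⟩ := hval (r+1) (by omega) hr
            have hjj' : j < j' := by rw [Fin.lt_def]; omega
            have := Fin.lt_def.mp (hσ hjj')
            rw [hv, hv']; omega
          · obtain ⟨j, hj, hv⟩ := hval (m:ℤ) (by exact_mod_cast hm) le_rfl
            have heq := τ.2.2 0
            rw [zero_add] at heq
            rw [show r = (m:ℤ) by omega, hv, heq, h0]
            have := (σ j).isLt
            omega
      refine ⟨para_strictMono τ key, h0, ?_⟩
      obtain ⟨j, hj, hv⟩ := hval (m:ℤ) (by exact_mod_cast hm) le_rfl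
      rw [hv]
      have := (σ j).isLt
      omega
  refine ⟨main, ?_, fun σ hσ => hσ.1, ?_, ?_⟩
  · -- finiteness
    rw [← Set.finite_coe_iff]
    refine Finite.of_injective
      (fun x : {τ : Para m n | StrictMono τ.1 ∧ τ.1 0 = 0 ∧ τ.1 (m : ℕ) ≤ n} =>
        Classical.choose ((main x.1).mp x.2)) ?_
    intro x y hxy
    have hxy' : Classical.choose ((main x.1).mp x.2)
        = Classical.choose ((main y.1).mp y.2) := hxy
    obtain ⟨hs1, h01, hv1⟩ := Classical.choose_spec ((main x.1).mp x.2)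
    obtain ⟨hs2, h02, hv2⟩ := Classical.choose_spec ((main y.1).mp y.2)
    apply Subtype.ext
    apply para_agree
    intro r h0 h2
    rcases eq_or_lt_of_le h0 with h|h
    · rw [← h, h01, h02]
    · have hjm : (r-1).toNat < m := by omega
      have hj : (((⟨(r-1).toNat, hjm⟩ : Fin m) : ℕ) : ℤ) + 1 = r := by
        simp only [Fin.val_mk]; omega
      rw [← hj, hv1 ⟨(r-1).toNat, hjm⟩, hv2 ⟨(r-1).toNat, hjm⟩, hxy']
  · -- unique orbit representative
    intro τ hτ
    refine ⟨⟨fun i => τ.1 i - τ.1 0,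
        fun a b h => by have := τ.2.1 h; simp only []; omega,
        fun i => by have := τ.2.2 i; simp only []; omega⟩,
      ⟨⟨fun a b h => by have := hτ h; simp only []; omega, by simp, ?_⟩,
        ⟨τ.1 0, fun i => rfl⟩⟩, ?_⟩
    · show τ.1 (m:ℤ) - τ.1 0 ≤ n
      have h1 := τ.2.2 0
      rw [zero_add] at h1
      have h2 : τ.1 (m:ℤ) < τ.1 ((m:ℤ)+1) := hτ (by omega)
      omega
    · rintro ρ' ⟨⟨hs', h0', _⟩, k, hk⟩
      apply Subtype.ext; funext i
      have hk0 := hk 0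
      rw [h0'] at hk0
      have := hk i
      show ρ'.1 i = τ.1 i - τ.1 0
      omega
  · -- convexity
    intro σ hσ τ' hτ' ρ hρ hle1 hle2
    have h1 : σ.1 0 ≤ ρ.1 0 := hle1 0
    have h2 : ρ.1 0 ≤ τ'.1 0 := hle2 0
    have h3 : ρ.1 (m:ℤ) ≤ τ'.1 (m:ℤ) := hle2 (m:ℤ)
    obtain ⟨_, hσ0, _⟩ := hσ
    obtain ⟨_, hτ'0, hτ'm⟩ := hτ'
    exact ⟨hρ, by omega, by omega⟩
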